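/- Let C be a chain complex of abelian groups indexed by the integers and f : C → C a chain map. Let K be the subcomplex of degreewise kernels, K_n = ker(f_n), and Q the quotient complex of degreewise cokernels, Q_n = C_n / f(C_n), both with the induced differentials. Then there is a long exact sequence ⋯ → H_i(K) → H_{i+1}(cone(f)) → H_{i+1}(Q) → H_{i-1}(K) → H_i(cone(f)) → H_i(Q) → H_{i-2}(K) → ⋯, in which H_i(K) → H_{i+1}(cone(f)) is induced by k ↦ (k, 0) ∈ C_i ⊕ C_{i+1} = cone(f)_{i+1}, H_{i+1}(cone(f)) → H_{i+1}(Q) is induced by (x, y) ↦ [y], and H_{i+1}(Q) → H_{i-1}(K) is a suitable connecting homomorphism (sending the class of a cycle represented by c ∈ C_{i+1} with d_C c = f(c') for some c' ∈ C_i to the class of d_C c' ∈ K_{i-1}). -/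

import Mathlib

/-- A chain complex of abelian groups indexed by `ℤ`. -/
structure CC where
  X : ℤ → Type
  grp : ∀ i, AddCommGroup (X i)
  d : ∀ i, X i →+ X (i - 1)
  dd : ∀ i (x : X i), d (i - 1) (d i x) = 0

attribute [instance] CC.grp

namespace CC

/-- Transport along an equality of degrees. -/
def cast (C : CC) {i j : ℤ} (h : i = j) : C.X i →+ C.X j where
  toFun x := h ▸ x
  map_zero' := by subst h; rfl
  map_add' := by subst h; intros; rfl

@[simp] lemma cast_rfl (C : CC) {i : ℤ} (x : C.X i) : C.cast rfl x = x := rfl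

/-- The `n`-cycles. -/
def cycles (C : CC) (n : ℤ) : AddSubgroup (C.X n) := (C.d n).ker

/-- The boundary map `C_{n+1} → C_n`. -/
def bd (C : CC) (n : ℤ) : C.X (n + 1) →+ C.X n :=
  (C.cast (by omega)).comp (C.d (n + 1))

/-- The boundaries, as a subgroup of the cycles. -/
def boundariesIn (C : CC) (n : ℤ) : AddSubgroup ↥(C.cycles n) :=
  (C.bd n).range.comap (C.cycles n).subtype

/-- The `n`-th homology group `H_n(C) = Z_n/B_n`. -/
abbrev homology (C : CC) (n : ℤ) : Type := ↥(C.cycles n) ⧸ C.boundariesIn n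

/-- Transport on homology along an equality of degrees (the identity map). -/
def hcast (C : CC) {i j : ℤ} (h : i = j) : C.homology i →+ C.homology j := by
  subst h; exact AddMonoidHom.id _

/-- A chain map. -/
structure Hom (C D : CC) where
  f : ∀ i, C.X i →+ D.X i
  comm : ∀ i (x : C.X i), D.d i (f i x) = f (i - 1) (C.d i x)

namespace Hom

variable {C D : CC}

lemma cast_comm (φ : Hom C D) {i j : ℤ} (h : i = j) (x : C.X i) :
    φ.f j (C.cast h x) = D.cast h (φ.f i x) := by subst h; rfl

/-- The map induced on cycles by a chain map. -/
def cyclesMap (φ : Hom C D) (n : ℤ) : ↥(C.cycles n) →+ ↥(D.cycles n) :=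
  ((φ.f n).comp (C.cycles n).subtype).codRestrict _ (fun x => by
    have hx : C.d n x.1 = 0 := x.2
    show D.d n (φ.f n x.1) = 0
    rw [φ.comm, hx, map_zero])

/-- The map `H_n(f) : H_n(C) → H_n(D)` induced on homology by a chain map. -/
def Hmap (φ : Hom C D) (n : ℤ) : C.homology n →+ D.homology n :=
  QuotientAddGroup.map _ _ (φ.cyclesMap n) (by
    rintro x ⟨z, hz⟩
    refine ⟨φ.f (n + 1) z, ?_⟩
    have hz' : C.bd n z = (x : C.X n) := hz
    show D.bd n (φ.f (n + 1) z) = φ.f n x.1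
    rw [← hz']
    show (D.cast _) (D.d (n + 1) (φ.f (n + 1) z)) = φ.f n ((C.cast _) (C.d (n + 1) z))
    rw [φ.comm, φ.cast_comm])

end Hom

/-- The mapping cone of a chain self-map, with `cone(f)_n = C_{n-1} ⊕ C_n` and
differential `d(x, y) = (-d x, f x + d y)`. -/
def cone {C : CC} (φ : Hom C C) : CC where
  X n := C.X (n - 1) × C.X n
  grp n := inferInstance
  d n := AddMonoidHom.prod
      (-((C.d (n - 1)).comp (AddMonoidHom.fst _ _)))
      (((φ.f (n - 1)).comp (AddMonoidHom.fst _ _)) +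
        ((C.d n).comp (AddMonoidHom.snd _ _)))
  dd n x := by
    obtain ⟨u, v⟩ := x
    simp only [AddMonoidHom.prod_apply, AddMonoidHom.neg_apply, AddMonoidHom.add_apply,
      AddMonoidHom.comp_apply, AddMonoidHom.coe_fst, AddMonoidHom.coe_snd, map_neg, map_add,
      neg_neg]
    rw [C.dd, C.dd, φ.comm]
    simp [Prod.ext_iff]

end CC

namespace CC

/-- The degreewise cokernel complex `Q_n = C_n / f(C_n)` of a chain self-map. -/
def cokerComplex {C : CC} (φ : Hom C C) : CC where
  X n := C.X n ⧸ (φ.f n).range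
  grp n := inferInstance
  d n := QuotientAddGroup.map _ _ (C.d n) (by
    rintro x ⟨y, rfl⟩
    exact ⟨C.d n y, (φ.comm n y).symm⟩)
  dd n x := by
    induction x using QuotientAddGroup.induction_on with
    | H z =>
      show QuotientAddGroup.mk (C.d (n - 1) (C.d n z)) = 0
      rw [C.dd]
      rfl

/-- The degreewise kernel complex `K_n = ker(f_n)` of a chain self-map. -/
def kerComplex {C : CC} (φ : Hom C C) : CC where
  X n := ↥(φ.f n).ker
  grp n := inferInstance
  d n := ((C.d n).comp (φ.f n).ker.subtype).codRestrict _ (fun x => by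
    have hx : φ.f n x.1 = 0 := x.2
    show φ.f (n - 1) (C.d n x.1) = 0
    rw [← φ.comm, hx, map_zero])
  dd n x := by
    apply Subtype.ext
    show C.d (n - 1) (C.d n x.1) = 0
    exact C.dd n x.1

end CC

namespace CC

section Aux

variable {C : CC} (f : Hom C C)

lemma cast_self (C : CC) {i : ℤ} (h : i = i) (x : C.X i) : C.cast h x = x := rfl

lemma cast_cast (C : CC) {i j k : ℤ} (h1 : i = j) (h2 : j = k) (x : C.X i) :
    C.cast h2 (C.cast h1 x) = C.cast (h1.trans h2) x := by subst h1 h2; rfl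

lemma cast_irrel (C : CC) {i j : ℤ} (h h' : i = j) (x : C.X i) :
    C.cast h x = C.cast h' x := rfl

lemma cast_d (C : CC) {i j : ℤ} (h : i = j) (h' : i - 1 = j - 1) (x : C.X i) :
    C.d j (C.cast h x) = C.cast h' (C.d i x) := by subst h; rfl

lemma cast_inj (C : CC) {i j : ℤ} (h : i = j) {x y : C.X i}
    (hxy : C.cast h x = C.cast h y) : x = y := by subst h; exact hxy

lemma mem_cycles {C : CC} {n : ℤ} {x : C.X n} : x ∈ C.cycles n ↔ C.d n x = 0 := Iff.rfl

lemma mem_boundariesIn {C : CC} {n : ℤ} {x : ↥(C.cycles n)} :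
    x ∈ C.boundariesIn n ↔ ∃ z : C.X (n + 1), C.bd n z = x.1 := Iff.rfl

lemma bd_eq (C : CC) (n : ℤ) (h : n + 1 - 1 = n) (z : C.X (n + 1)) :
    C.bd n z = C.cast h (C.d (n + 1) z) := rfl

lemma cycles_cast {C : CC} {i j : ℤ} (h : i = j) {x : C.X i} (hx : x ∈ C.cycles i) :
    C.cast h x ∈ C.cycles j := by subst h; exact hx

lemma hcast_mk (C : CC) {i j : ℤ} (h : i = j) (x : ↥(C.cycles i)) :
    C.hcast h (QuotientAddGroup.mk x) =
      QuotientAddGroup.mk ⟨C.cast h x.1, cycles_cast h x.2⟩ := by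
  subst h
  show QuotientAddGroup.mk x = _
  congr 1

lemma cone_d (n : ℤ) (p : (cone f).X n) :
    (cone f).d n p = (-(C.d (n - 1) p.1), f.f (n - 1) p.1 + C.d n p.2) := rfl

lemma cone_cast {m n : ℤ} (h : m = n) (h' : m - 1 = n - 1) (p : (cone f).X m) :
    (cone f).cast h p = (C.cast h' p.1, C.cast h p.2) := by subst h; rfl

lemma ker_d_val (n : ℤ) (x : (kerComplex f).X n) :
    ((kerComplex f).d n x).1 = C.d n x.1 := rfl

lemma ker_cast_val {m n : ℤ} (h : m = n) (x : (kerComplex f).X m) :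
    ((kerComplex f).cast h x).1 = C.cast h x.1 := by subst h; rfl

lemma coker_d (n : ℤ) (c : C.X n) :
    (cokerComplex f).d n (QuotientAddGroup.mk c) = QuotientAddGroup.mk (C.d n c) := rfl

lemma coker_cast {m n : ℤ} (h : m = n) (c : C.X m) :
    (cokerComplex f).cast h (QuotientAddGroup.mk c) =
      QuotientAddGroup.mk (C.cast h c) := by subst h; rfl

end Aux


section Maps

variable {C : CC} (f : Hom C C)

lemma aCyc_mem (i : ℤ) (k : ↥((kerComplex f).cycles (i - 1))) :
    ((k.1.1, 0) : (cone f).X i) ∈ (cone f).cycles i := by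
  have h1 : C.d (i - 1) k.1.1 = 0 := congrArg Subtype.val k.2
  have h2 : f.f (i - 1) k.1.1 = 0 := k.1.2
  show (cone f).d i (k.1.1, 0) = 0
  erw [cone_d]
  simp [h1, h2, Prod.ext_iff]
  rfl

/-- The map `K_{i-1} → cone(f)_i`, `k ↦ (k, 0)`, on cycles. -/
def aCyc (i : ℤ) : ↥((kerComplex f).cycles (i - 1)) →+ ↥((cone f).cycles i) :=
  AddMonoidHom.mk' (fun k => ⟨(k.1.1, 0), aCyc_mem f i k⟩) (by
    intro x y
    apply Subtype.ext
    show ((x + y).1.1, (0 : C.X i)) = (x.1.1 + y.1.1, 0 + 0)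
    simp [Prod.ext_iff]
    rfl)

lemma a_bd (i : ℤ) (x : ↥((kerComplex f).cycles (i - 1)))
    (hx : x ∈ (kerComplex f).boundariesIn (i - 1)) :
    aCyc f i x ∈ (cone f).boundariesIn i := by
  obtain ⟨z, hz⟩ := hx
  refine ⟨(-(C.cast (by omega) z.1), 0), ?_⟩
  show (cone f).cast (by omega) ((cone f).d (i + 1) _) = ((aCyc f i x).1.1, (0 : C.X i))
  erw [cone_d, cone_cast f (by omega : (i:ℤ) + 1 - 1 = i) (by omega)]
  have hz1 : C.cast (by omega : (i:ℤ) - 1 + 1 - 1 = i - 1) (C.d (i - 1 + 1) z.1) = x.1.1 := by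
    have h0 : ((kerComplex f).cast (by omega : (i:ℤ) - 1 + 1 - 1 = i - 1)
        ((kerComplex f).d (i - 1 + 1) z)).1 = x.1.1 := congrArg Subtype.val hz
    rw [ker_cast_val] at h0
    exact h0
  have hfz : f.f (i - 1 + 1) z.1 = 0 := z.2
  apply Prod.ext
  · show C.cast _ (-(C.d (i + 1 - 1) (-(C.cast _ z.1)))) = x.1.1
    simp only [map_neg, neg_neg]
    rw [cast_d C (by omega : (i:ℤ) - 1 + 1 = i + 1 - 1) (by omega), cast_cast]
    exact hz1
  · show C.cast _ (f.f (i + 1 - 1) (-(C.cast _ z.1)) + C.d (i + 1) 0) = 0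
    rw [map_zero, add_zero, map_neg, f.cast_comm, hfz]
    simp

/-- The map `H_{i-1}(K) → H_i(cone f)`. -/
def aH (i : ℤ) : (kerComplex f).homology (i - 1) →+ (cone f).homology i :=
  QuotientAddGroup.map _ _ (aCyc f i) (a_bd f i)

lemma cone_cycle_snd (i : ℤ) (z : ↥((cone f).cycles i)) :
    f.f (i - 1) z.1.1 + C.d i z.1.2 = 0 := by
  have := z.2
  rw [mem_cycles, cone_d] at this
  exact congrArg Prod.snd this

lemma cone_cycle_fst (i : ℤ) (z : ↥((cone f).cycles i)) : C.d (i - 1) z.1.1 = 0 := by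
  have := z.2
  rw [mem_cycles, cone_d] at this
  have := congrArg Prod.fst this
  exact neg_eq_zero.mp this

lemma bCyc_mem (i : ℤ) (z : ↥((cone f).cycles i)) :
    (QuotientAddGroup.mk z.1.2 : (cokerComplex f).X i) ∈ (cokerComplex f).cycles i := by
  erw [mem_cycles, coker_d]
  erw [QuotientAddGroup.eq_zero_iff]
  refine ⟨-z.1.1, ?_⟩
  have := cone_cycle_snd f i z
  rw [map_neg]
  exact (eq_neg_of_add_eq_zero_right this).symm

/-- The map `cone(f)_i → Q_i`, `(x, y) ↦ [y]`, on cycles. -/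
def bCyc (i : ℤ) : ↥((cone f).cycles i) →+ ↥((cokerComplex f).cycles i) :=
  AddMonoidHom.mk' (fun z => ⟨QuotientAddGroup.mk z.1.2, bCyc_mem f i z⟩) (by
    intro x y
    apply Subtype.ext
    show (QuotientAddGroup.mk (x.1.2 + y.1.2) : (cokerComplex f).X i) = _
    rw [QuotientAddGroup.mk_add]
    rfl)

lemma b_bd (i : ℤ) (z : ↥((cone f).cycles i)) (hz : z ∈ (cone f).boundariesIn i) :
    bCyc f i z ∈ (cokerComplex f).boundariesIn i := by
  obtain ⟨w, hw⟩ := hz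
  refine ⟨QuotientAddGroup.mk w.2, ?_⟩
  show (cokerComplex f).cast (by omega) ((cokerComplex f).d (i + 1) _) =
    (QuotientAddGroup.mk z.1.2 : (cokerComplex f).X i)
  rw [coker_d, coker_cast]
  have hw' : (cone f).cast (by omega : (i:ℤ) + 1 - 1 = i) ((cone f).d (i + 1) w) = z.1 := hw
  erw [cone_d, cone_cast f (by omega : (i:ℤ) + 1 - 1 = i) (by omega)] at hw'
  have hsnd : C.cast (by omega : (i:ℤ) + 1 - 1 = i)
      (f.f (i + 1 - 1) w.1 + C.d (i + 1) w.2) = z.1.2 := congrArg Prod.snd hw' 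
  erw [QuotientAddGroup.eq_iff_sub_mem]
  refine ⟨-(C.cast (by omega : (i:ℤ) + 1 - 1 = i) w.1), ?_⟩
  rw [map_neg, f.cast_comm, ← hsnd, map_add]
  abel

/-- The map `H_i(cone f) → H_i(Q)`. -/
def bH (i : ℤ) : (cone f).homology i →+ (cokerComplex f).homology i :=
  QuotientAddGroup.map _ _ (bCyc f i) (b_bd f i)

end Maps


section Delta

variable {C : CC} (f : Hom C C)

lemma dout_ker (i : ℤ) (c : C.X i) (c' : C.X (i - 1)) (h : f.f (i - 1) c' = C.d i c) :
    C.d (i - 1) c' ∈ (f.f (i - 1 - 1)).ker := by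
  show f.f (i - 1 - 1) (C.d (i - 1) c') = 0
  rw [← f.comm, h, C.dd]

lemma dout_cyc (i : ℤ) (c' : C.X (i - 1)) (hk : C.d (i - 1) c' ∈ (f.f (i - 1 - 1)).ker) :
    (⟨C.d (i - 1) c', hk⟩ : (kerComplex f).X (i - 1 - 1)) ∈
      (kerComplex f).cycles (i - 1 - 1) := by
  apply Subtype.ext
  show C.d (i - 1 - 1) (C.d (i - 1) c') = 0
  exact C.dd (i - 1) c'

/-- Value of the connecting map on representatives. -/
def dout (i : ℤ) (c : C.X i) (c' : C.X (i - 1)) (h : f.f (i - 1) c' = C.d i c) :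
    (kerComplex f).homology (i - 1 - 1) :=
  QuotientAddGroup.mk ⟨⟨C.d (i - 1) c', dout_ker f i c c' h⟩, dout_cyc f i c' _⟩

lemma dout_eq (i : ℤ) (c₁ c₂ : C.X i) (c₁' c₂' : C.X (i - 1))
    (h₁ : f.f (i - 1) c₁' = C.d i c₁) (h₂ : f.f (i - 1) c₂' = C.d i c₂)
    (hc : (QuotientAddGroup.mk c₁ : (cokerComplex f).X i) = QuotientAddGroup.mk c₂) :
    dout f i c₁ c₁' h₁ = dout f i c₂ c₂' h₂ := by
  rw [QuotientAddGroup.eq_iff_sub_mem] at hc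
  obtain ⟨e, he⟩ := hc
  set k : C.X (i - 1) := c₁' - c₂' - C.d i e with hkdef
  have hker : f.f (i - 1) k = 0 := by
    have hcm : f.f (i - 1) (C.d i e) = C.d i (f.f i e) := (f.comm i e).symm
    rw [hkdef, map_sub, map_sub, h₁, h₂, hcm, he, map_sub]
    abel
  apply (QuotientAddGroup.eq_iff_sub_mem).2
  refine ⟨(kerComplex f).cast (by omega : (i:ℤ) - 1 = i - 1 - 1 + 1) ⟨k, hker⟩, ?_⟩
  apply Subtype.ext
  have hb : (((kerComplex f).bd (i - 1 - 1)
      ((kerComplex f).cast (by omega : (i:ℤ) - 1 = i - 1 - 1 + 1) ⟨k, hker⟩)).1 : C.X (i - 1 - 1))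
      = C.d (i - 1) k := by
    show ((kerComplex f).cast (by omega : (i:ℤ) - 1 - 1 + 1 - 1 = i - 1 - 1)
      ((kerComplex f).d (i - 1 - 1 + 1)
        ((kerComplex f).cast (by omega : (i:ℤ) - 1 = i - 1 - 1 + 1) ⟨k, hker⟩))).1 = _
    rw [ker_cast_val]
    show C.cast _ (C.d (i - 1 - 1 + 1)
      (((kerComplex f).cast (by omega : (i:ℤ) - 1 = i - 1 - 1 + 1) ⟨k, hker⟩)).1) = _
    erw [ker_cast_val, cast_d C (by omega : (i:ℤ) - 1 = i - 1 - 1 + 1) (by omega), cast_cast]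
    exact cast_self C _ _
  show (((kerComplex f).bd (i - 1 - 1) _).1 : C.X (i - 1 - 1)) =
    C.d (i - 1) c₁' - C.d (i - 1) c₂'
  rw [hb, hkdef, map_sub, map_sub, C.dd, sub_zero]

lemma dout_add (i : ℤ) (c₁ c₂ : C.X i) (c₁' c₂' : C.X (i - 1))
    (h₁ : f.f (i - 1) c₁' = C.d i c₁) (h₂ : f.f (i - 1) c₂' = C.d i c₂)
    (h₃ : f.f (i - 1) (c₁' + c₂') = C.d i (c₁ + c₂)) :
    dout f i (c₁ + c₂) (c₁' + c₂') h₃ = dout f i c₁ c₁' h₁ + dout f i c₂ c₂' h₂ := by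
  show QuotientAddGroup.mk _ = QuotientAddGroup.mk _ + QuotientAddGroup.mk _
  rw [← QuotientAddGroup.mk_add]
  congr 1
  apply Subtype.ext
  apply Subtype.ext
  exact map_add _ _ _

lemma dout_zero' (i : ℤ) (c : C.X i) (h : f.f (i - 1) 0 = C.d i c) :
    dout f i c 0 h = 0 := by
  have h0 : (⟨⟨C.d (i - 1) 0, dout_ker f i c 0 h⟩, dout_cyc f i 0 _⟩ :
      ↥((kerComplex f).cycles (i - 1 - 1))) = 0 := by
    apply Subtype.ext
    apply Subtype.ext
    exact map_zero _
  show QuotientAddGroup.mk _ = 0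
  rw [h0]
  rfl

lemma dspec (i : ℤ) (x : ↥((cokerComplex f).cycles i)) :
    ∃ p : C.X i × C.X (i - 1),
      (QuotientAddGroup.mk p.1 : (cokerComplex f).X i) = x.1 ∧ f.f (i - 1) p.2 = C.d i p.1 := by
  obtain ⟨c, hc⟩ := QuotientAddGroup.mk_surjective x.1
  have hx : (cokerComplex f).d i x.1 = 0 := x.2
  rw [← hc, coker_d] at hx
  obtain ⟨c', hc'⟩ := (QuotientAddGroup.eq_zero_iff _).1 hx
  exact ⟨(c, c'), hc, hc'⟩

noncomputable def dCycFun (i : ℤ) (x : ↥((cokerComplex f).cycles i)) :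
    (kerComplex f).homology (i - 1 - 1) :=
  dout f i (Classical.choose (dspec f i x)).1 (Classical.choose (dspec f i x)).2
    (Classical.choose_spec (dspec f i x)).2

lemma dCycFun_eq (i : ℤ) (x : ↥((cokerComplex f).cycles i)) (c : C.X i) (c' : C.X (i - 1))
    (hc : (QuotientAddGroup.mk c : (cokerComplex f).X i) = x.1)
    (h : f.f (i - 1) c' = C.d i c) :
    dCycFun f i x = dout f i c c' h := by
  apply dout_eq
  rw [(Classical.choose_spec (dspec f i x)).1, ← hc]

/-- The connecting map on cycles. -/
noncomputable def dCyc (i : ℤ) :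
    ↥((cokerComplex f).cycles i) →+ (kerComplex f).homology (i - 1 - 1) :=
  AddMonoidHom.mk' (dCycFun f i) (by
    intro x y
    obtain ⟨⟨c1, c1'⟩, h1, h1'⟩ := dspec f i x
    obtain ⟨⟨c2, c2'⟩, h2, h2'⟩ := dspec f i y
    have hsum : (QuotientAddGroup.mk (c1 + c2) : (cokerComplex f).X i) = (x + y).1 := by
      rw [QuotientAddGroup.mk_add, h1, h2]
      rfl
    have hsum' : f.f (i - 1) (c1' + c2') = C.d i (c1 + c2) := by
      rw [map_add, map_add, h1', h2']
    rw [dCycFun_eq f i x c1 c1' h1 h1', dCycFun_eq f i y c2 c2' h2 h2',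
      dCycFun_eq f i (x + y) (c1 + c2) (c1' + c2') hsum hsum']
    exact dout_add f i c1 c2 c1' c2' h1' h2' hsum')

lemma dCyc_bd (i : ℤ) (x : ↥((cokerComplex f).cycles i))
    (hx : x ∈ (cokerComplex f).boundariesIn i) : dCyc f i x = 0 := by
  obtain ⟨w, hw⟩ := hx
  obtain ⟨v, rfl⟩ := QuotientAddGroup.mk_surjective w
  have hb : (cokerComplex f).bd i (QuotientAddGroup.mk v) =
      QuotientAddGroup.mk (C.cast (by omega : (i:ℤ) + 1 - 1 = i) (C.d (i + 1) v)) := by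
    show (cokerComplex f).cast (by omega)
      ((cokerComplex f).d (i + 1) (QuotientAddGroup.mk v)) = _
    rw [coker_d, coker_cast]
  rw [hb] at hw
  have hd : f.f (i - 1) 0 =
      C.d i (C.cast (by omega : (i:ℤ) + 1 - 1 = i) (C.d (i + 1) v)) := by
    rw [map_zero, cast_d C (by omega : (i:ℤ) + 1 - 1 = i) (by omega), C.dd, map_zero]
  show dCycFun f i x = 0
  rw [dCycFun_eq f i x _ 0 hw hd]
  exact dout_zero' f i _ hd

/-- The connecting map `H_i(Q) → H_{i-2}(K)`. -/
noncomputable def dH (i : ℤ) :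
    (cokerComplex f).homology i →+ (kerComplex f).homology (i - 1 - 1) :=
  QuotientAddGroup.lift _ (dCyc f i) (dCyc_bd f i)

end Delta


section BdHelpers

variable {C : CC} (f : Hom C C)

lemma cone_bd (i : ℤ) (w : (cone f).X (i + 1))
    (h1 : (i:ℤ) + 1 - 1 - 1 = i - 1) (h2 : (i:ℤ) + 1 - 1 = i) :
    (cone f).bd i w = (C.cast h1 (-(C.d (i + 1 - 1) w.1)),
      C.cast h2 (f.f (i + 1 - 1) w.1 + C.d (i + 1) w.2)) := by
  show (cone f).cast h2 ((cone f).d (i + 1) w) = _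
  erw [cone_d, cone_cast f h2 h1]

lemma ker_bd_val (n : ℤ) (z : (kerComplex f).X (n + 1)) (h : (n:ℤ) + 1 - 1 = n) :
    (((kerComplex f).bd n z).1 : C.X n) = C.cast h (C.d (n + 1) z.1) := by
  show (((kerComplex f).cast h ((kerComplex f).d (n + 1) z)).1 : C.X n) = _
  rw [ker_cast_val]
  rfl

lemma coker_bd (n : ℤ) (v : C.X (n + 1)) (h : (n:ℤ) + 1 - 1 = n) :
    (cokerComplex f).bd n (QuotientAddGroup.mk v) =
      QuotientAddGroup.mk (C.cast h (C.d (n + 1) v)) := by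
  show (cokerComplex f).cast h ((cokerComplex f).d (n + 1) (QuotientAddGroup.mk v)) = _
  rw [coker_d, coker_cast]

end BdHelpers

end CC


open CC in
/-- For a chain self-map `f : C → C` with degreewise kernel complex `K` and degreewise
cokernel complex `Q`, there is a long exact sequence
`⋯ → H_i(K) → H_{i+1}(cone f) → H_{i+1}(Q) → H_{i-1}(K) → H_i(cone f) → ⋯`, where
`H_{i-1}(K) → H_i(cone f)` is induced by `k ↦ (k, 0)`, `H_i(cone f) → H_i(Q)` is induced by
`(x, y) ↦ [y]`, and `H_i(Q) → H_{i-2}(K)` is the connecting homomorphism sending the class of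
a cycle represented by `c ∈ C_i` with `d c = f(c')`, `c' ∈ C_{i-1}`, to the class of `d c'`. -/
theorem statement4 (C : CC) (f : CC.Hom C C) :
    ∃ (a : ∀ i : ℤ, (kerComplex f).homology (i - 1) →+ (cone f).homology i)
      (b : ∀ i : ℤ, (cone f).homology i →+ (cokerComplex f).homology i)
      (δ : ∀ i : ℤ, (cokerComplex f).homology i →+ (kerComplex f).homology (i - 1 - 1)),
      (∀ (i : ℤ) (k : ↥(f.f (i - 1)).ker) (hk : k ∈ (kerComplex f).cycles (i - 1))
        (hk' : (((k : C.X (i - 1)), 0) : (cone f).X i) ∈ (cone f).cycles i),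
        a i (QuotientAddGroup.mk ⟨k, hk⟩) = QuotientAddGroup.mk ⟨((k : C.X (i - 1)), 0), hk'⟩) ∧
      (∀ (i : ℤ) (z : (cone f).X i) (hz : z ∈ (cone f).cycles i)
        (hz' : (QuotientAddGroup.mk z.2 : (cokerComplex f).X i) ∈ (cokerComplex f).cycles i),
        b i (QuotientAddGroup.mk ⟨z, hz⟩) = QuotientAddGroup.mk ⟨QuotientAddGroup.mk z.2, hz'⟩) ∧
      (∀ (i : ℤ) (c : C.X i)
        (hc : (QuotientAddGroup.mk c : (cokerComplex f).X i) ∈ (cokerComplex f).cycles i)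
        (c' : C.X (i - 1)) (hcc' : C.d i c = f.f (i - 1) c')
        (h2 : C.d (i - 1) c' ∈ (f.f (i - 1 - 1)).ker)
        (h3 : (⟨C.d (i - 1) c', h2⟩ : (kerComplex f).X (i - 1 - 1)) ∈
          (kerComplex f).cycles (i - 1 - 1)),
        δ i (QuotientAddGroup.mk ⟨QuotientAddGroup.mk c, hc⟩) =
          QuotientAddGroup.mk ⟨⟨C.d (i - 1) c', h2⟩, h3⟩) ∧
      (∀ i : ℤ,
        Function.Exact (a i) (b i) ∧
        Function.Exact (b i) (δ i) ∧
        Function.Exact (δ (i + 1))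
          ((a i).comp ((kerComplex f).hcast (show i + 1 - 1 - 1 = i - 1 by omega)))) := by
  classical
  refine ⟨aH f, bH f, dH f, ?_, ?_, ?_, ?_⟩
  · -- formula for a
    intro i k hk hk'
    erw [aH, QuotientAddGroup.map_mk]
    exact congrArg _ (Subtype.ext rfl)
  · -- formula for b
    intro i z hz hz'
    erw [bH, QuotientAddGroup.map_mk]
    exact congrArg _ (Subtype.ext rfl)
  · -- formula for δ
    intro i c hc c' hcc' h2 h3
    erw [dH, QuotientAddGroup.lift_mk]
    show dCycFun f i _ = _
    rw [dCycFun_eq f i ⟨QuotientAddGroup.mk c, hc⟩ c c' rfl hcc'.symm]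
    rfl
  · intro i
    refine ⟨?_, ?_, ?_⟩
    · -- exactness at cone
      intro y
      induction y using QuotientAddGroup.induction_on with
      | H z =>
        constructor
        · intro hy
          erw [bH, QuotientAddGroup.map_mk, QuotientAddGroup.eq_zero_iff] at hy
          obtain ⟨w, hw⟩ := hy
          obtain ⟨v, rfl⟩ := QuotientAddGroup.mk_surjective w
          rw [coker_bd f i v (by omega)] at hw
          have hw' : (QuotientAddGroup.mk (C.cast (by omega : (i:ℤ) + 1 - 1 = i)
              (C.d (i + 1) v)) : (cokerComplex f).X i) = QuotientAddGroup.mk z.1.2 := hw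
          rw [QuotientAddGroup.eq_iff_sub_mem] at hw'
          obtain ⟨u, hu⟩ := hw'
          have hz2 : z.1.2 = C.cast (by omega : (i:ℤ) + 1 - 1 = i) (C.d (i + 1) v) -
              f.f i u := by rw [hu]; abel
          have hfk : f.f (i - 1) (z.1.1 - C.d i u) = 0 := by
            have hc1 := cone_cycle_snd f i z
            have hc2 : C.d i z.1.2 = -C.d i (f.f i u) := by
              rw [hz2, map_sub, cast_d C (by omega : (i:ℤ) + 1 - 1 = i) (by omega), C.dd,
                map_zero]
              abel
            have hc3 : f.f (i - 1) (C.d i u) = C.d i (f.f i u) := (f.comm i u).symm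
            have hc4 : f.f (i - 1) z.1.1 = -C.d i z.1.2 := eq_neg_of_add_eq_zero_left hc1
            rw [map_sub, hc3, hc4, hc2]
            abel
          have hdk : C.d (i - 1) (z.1.1 - C.d i u) = 0 := by
            rw [map_sub, cone_cycle_fst f i z, C.dd]
            abel
          refine ⟨QuotientAddGroup.mk ⟨⟨z.1.1 - C.d i u, hfk⟩, Subtype.ext hdk⟩, ?_⟩
          erw [aH, QuotientAddGroup.map_mk, QuotientAddGroup.eq_iff_sub_mem]
          refine ⟨(C.cast (by omega : (i:ℤ) = i + 1 - 1) u, -v), ?_⟩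
          erw [cone_bd f i _ (by omega) (by omega)]
          apply Prod.ext
          · show C.cast _ (-(C.d (i + 1 - 1) (C.cast _ u))) = z.1.1 - C.d i u - z.1.1
            rw [map_neg, cast_d C (by omega : (i:ℤ) = i + 1 - 1) (by omega), CC.cast_cast,
              CC.cast_self]
            abel
          · show C.cast _ (f.f (i + 1 - 1) (C.cast _ u) + C.d (i + 1) (-v)) = 0 - z.1.2
            rw [map_neg, f.cast_comm, map_add, map_neg, CC.cast_cast, CC.cast_self, hz2]
            abel
        · rintro ⟨x, hx⟩
          rw [← hx]
          induction x using QuotientAddGroup.induction_on with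
          | H kx =>
            show (QuotientAddGroup.mk (bCyc f i (aCyc f i kx)) : (cokerComplex f).homology i) = 0
            have hbz : bCyc f i (aCyc f i kx) = 0 := by
              apply Subtype.ext
              show (QuotientAddGroup.mk (0 : C.X i) : (cokerComplex f).X i) = 0
              exact QuotientAddGroup.mk_zero _
            rw [hbz]
            exact QuotientAddGroup.mk_zero _
    · -- exactness at Q
      intro y
      induction y using QuotientAddGroup.induction_on with
      | H z =>
        constructor
        · intro hy
          erw [dH, QuotientAddGroup.lift_mk] at hy
          have hy' : dCycFun f i z = 0 := hy
          obtain ⟨⟨c, c'⟩, hc, h'⟩ := dspec f i z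
          rw [dCycFun_eq f i z c c' hc h', dout, QuotientAddGroup.eq_zero_iff] at hy'
          obtain ⟨zz, hzz⟩ := hy'
          have hk0f : f.f (i - 1) (C.cast (by omega : (i:ℤ) - 1 - 1 + 1 = i - 1) zz.1) = 0 := by
            rw [f.cast_comm]
            have : f.f (i - 1 - 1 + 1) zz.1 = 0 := zz.2
            rw [this, map_zero]
          have hk0d : C.d (i - 1) (C.cast (by omega : (i:ℤ) - 1 - 1 + 1 = i - 1) zz.1) =
              C.d (i - 1) c' := by
            have h1 := congrArg Subtype.val hzz
            rw [ker_bd_val f _ zz (by omega)] at h1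
            rw [cast_d C (by omega : (i:ℤ) - 1 - 1 + 1 = i - 1) (by omega)]
            exact h1
          have hp : ((C.cast (by omega : (i:ℤ) - 1 - 1 + 1 = i - 1) zz.1 - c', c) :
              (cone f).X i) ∈ (cone f).cycles i := by
            erw [mem_cycles, cone_d]
            apply Prod.ext
            · show -(C.d (i - 1) _) = 0
              rw [map_sub, hk0d, sub_self, neg_zero]
            · show f.f (i - 1) _ + C.d i c = 0
              rw [map_sub, hk0f, h']
              abel
          refine ⟨QuotientAddGroup.mk ⟨_, hp⟩, ?_⟩
          erw [bH, QuotientAddGroup.map_mk]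
          exact congrArg _ (Subtype.ext hc)
        · rintro ⟨x, hx⟩
          rw [← hx]
          induction x using QuotientAddGroup.induction_on with
          | H zc =>
            erw [bH, QuotientAddGroup.map_mk, dH, QuotientAddGroup.lift_mk]
            show dCycFun f i (bCyc f i zc) = 0
            have h' : f.f (i - 1) (-zc.1.1) = C.d i zc.1.2 := by
              rw [map_neg]
              exact (eq_neg_of_add_eq_zero_right (cone_cycle_snd f i zc)).symm
            rw [dCycFun_eq f i (bCyc f i zc) zc.1.2 (-zc.1.1) rfl h', dout,
              QuotientAddGroup.eq_zero_iff]
            refine ⟨0, ?_⟩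
            rw [map_zero]
            have hX : C.d (i - 1) (-zc.1.1) = 0 := by
              rw [map_neg, cone_cycle_fst f i zc, neg_zero]
            exact (Subtype.ext hX).symm
    · -- exactness at K
      intro y
      induction y using QuotientAddGroup.induction_on with
      | H x =>
        constructor
        · intro hy
          erw [AddMonoidHom.comp_apply, hcast_mk, aH, QuotientAddGroup.map_mk,
            QuotientAddGroup.eq_zero_iff] at hy
          obtain ⟨w, hw⟩ := hy
          rw [cone_bd f i w (by omega) (by omega)] at hw
          have h1 : C.cast (by omega : (i:ℤ) + 1 - 1 - 1 = i - 1) (-(C.d (i + 1 - 1) w.1)) =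
              (((kerComplex f).cast (show (i:ℤ) + 1 - 1 - 1 = i - 1 by omega) x.1).1 :
                C.X (i - 1)) :=
            congrArg Prod.fst hw
          have h2 : C.cast (by omega : (i:ℤ) + 1 - 1 = i)
              (f.f (i + 1 - 1) w.1 + C.d (i + 1) w.2) = (0 : C.X i) :=
            congrArg Prod.snd hw
          rw [ker_cast_val] at h1
          have h1' : -(C.d (i + 1 - 1) w.1) = x.1.1 :=
            cast_inj C (by omega : (i:ℤ) + 1 - 1 - 1 = i - 1) h1
          have h2'0 : C.cast (by omega : (i:ℤ) + 1 - 1 = i)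
              (f.f (i + 1 - 1) w.1 + C.d (i + 1) w.2) =
              C.cast (by omega : (i:ℤ) + 1 - 1 = i) (0 : C.X (i + 1 - 1)) := by
            rw [map_zero]
            exact h2
          have h2' : f.f (i + 1 - 1) w.1 + C.d (i + 1) w.2 = 0 :=
            cast_inj C (by omega) h2'0
          have h'' : f.f (i + 1 - 1) (-w.1) = C.d (i + 1) w.2 := by
            rw [map_neg]
            exact (eq_neg_of_add_eq_zero_right h2').symm
          have hqc : (QuotientAddGroup.mk w.2 : (cokerComplex f).X (i + 1)) ∈
              (cokerComplex f).cycles (i + 1) := by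
            erw [mem_cycles, coker_d, QuotientAddGroup.eq_zero_iff]
            exact ⟨-w.1, h''⟩
          refine ⟨QuotientAddGroup.mk ⟨QuotientAddGroup.mk w.2, hqc⟩, ?_⟩
          erw [dH, QuotientAddGroup.lift_mk]
          show dCycFun f (i + 1) _ = QuotientAddGroup.mk x
          rw [dCycFun_eq f (i + 1) ⟨QuotientAddGroup.mk w.2, hqc⟩ w.2 (-w.1) rfl h'', dout]
          refine congrArg _ (Subtype.ext (Subtype.ext ?_))
          show C.d (i + 1 - 1) (-w.1) = x.1.1
          rw [map_neg]
          exact h1'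
        · rintro ⟨q, hq⟩
          rw [← hq]
          induction q using QuotientAddGroup.induction_on with
          | H xq =>
            rw [dH]
            obtain ⟨⟨c, c'⟩, hc, h'⟩ := dspec f (i + 1) xq
            show ((aH f i).comp ((kerComplex f).hcast _)) (dCycFun f (i + 1) xq) = 0
            rw [dCycFun_eq f (i + 1) xq c c' hc h', dout, AddMonoidHom.comp_apply, hcast_mk,
              aH]
            erw [QuotientAddGroup.map_mk, QuotientAddGroup.eq_zero_iff]
            refine ⟨(-c', c), ?_⟩
            erw [cone_bd f i _ (by omega) (by omega)]
            apply Prod.ext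
            · show C.cast (by omega : (i:ℤ) + 1 - 1 - 1 = i - 1) (-(C.d (i + 1 - 1) (-c'))) =
                (((kerComplex f).cast (show (i:ℤ) + 1 - 1 - 1 = i - 1 by omega)
                  ⟨C.d (i + 1 - 1) c', dout_ker f (i + 1) c c' h'⟩).1 : C.X (i - 1))
              erw [ker_cast_val]
              simp only [map_neg, neg_neg]
            · show C.cast _ (f.f (i + 1 - 1) (-c') + C.d (i + 1) c) = 0
              rw [map_neg, h', neg_add_cancel, map_zero]
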